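/- For any finite nonempty family of points p_1,…,p_n in ℝ², the sum of squared distances Σ_{i=1}^n dist(p_i, S)² attains its minimum over the class of sets S that are either circles (spheres in ℝ² of positive radius) or affine lines in ℝ²; that is, there exists such a set S₀ with Σ_i dist(p_i, S₀)² ≤ Σ_i dist(p_i, S)² for every circle or line S. -/

import Mathlib

open Metric Finset
open scoped RealInnerProductSpace

/-- Points of the Euclidean plane. -/
abbrev E2 : Type := EuclideanSpace ℝ (Fin 2)

/-- A subset of the plane which is either a circle (a sphere of positive radius)
or an affine line. -/
def IsCircleOrLine (S : Set E2) : Prop :=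
  (∃ (c : E2) (R : ℝ), 0 < R ∧ S = Metric.sphere c R) ∨
  (∃ p v : E2, v ≠ 0 ∧ S = {q : E2 | ∃ t : ℝ, q = p + t • v})


noncomputable def rot2 (w : E2) : E2 := (WithLp.equiv 2 (Fin 2 → ℝ)).symm ![-w 1, w 0]
lemma rot2_rot2 (w : E2) : rot2 (rot2 w) = -w := by
  ext i; fin_cases i <;> simp [rot2]

lemma inner_E2 (z w : E2) : ⟪z, w⟫ = z 0 * w 0 + z 1 * w 1 := by
  rw [PiLp.inner_apply, Fin.sum_univ_two]; simp [RCLike.inner_apply]; ring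
lemma rot2_smul (a : ℝ) (w : E2) : rot2 (a • w) = a • rot2 w := by
  ext i; fin_cases i <;> simp [rot2] <;> ring
lemma norm_rot2 (w : E2) : ‖rot2 w‖ = ‖w‖ := by
  have h : ⟪rot2 w, rot2 w⟫ = ⟪w, w⟫ := by
    rw [inner_E2, inner_E2]; show (-w 1) * (-w 1) + w 0 * w 0 = _; ring
  rw [real_inner_self_eq_norm_sq, real_inner_self_eq_norm_sq] at h
  nlinarith [norm_nonneg (rot2 w), norm_nonneg w]
lemma inner_rot2_self (w : E2) : ⟪w, rot2 w⟫ = 0 := by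
  rw [inner_E2]; show w 0 * (-w 1) + w 1 * (w 0) = 0; ring
lemma pyth2 (z w : E2) : ⟪z, w⟫ ^ 2 + ⟪z, rot2 w⟫ ^ 2 = ‖z‖ ^ 2 * ‖w‖ ^ 2 := by
  rw [inner_E2, inner_E2, ← real_inner_self_eq_norm_sq, ← real_inner_self_eq_norm_sq,
    inner_E2, inner_E2]
  show (z 0 * w 0 + z 1 * w 1)^2 + (z 0 * (-w 1) + z 1 * (w 0))^2
    = (z 0 * z 0 + z 1 * z 1) * (w 0 * w 0 + w 1 * w 1)
  ring


lemma infDist_sphere (x c : E2) (R : ℝ) (hR : 0 < R) :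
    Metric.infDist x (Metric.sphere c R) = |dist x c - R| := by
  have hne : (Metric.sphere c R).Nonempty := NormedSpace.sphere_nonempty.mpr hR.le
  apply le_antisymm
  · rcases eq_or_ne x c with rfl | hxc
    · obtain ⟨y, hy⟩ := hne
      have h1 : Metric.infDist x (sphere x R) ≤ dist x y :=
        Metric.infDist_le_dist_of_mem hy
      rw [mem_sphere_iff_norm] at hy
      rw [dist_self, zero_sub, abs_neg, abs_of_pos hR]
      calc Metric.infDist x (sphere x R) ≤ dist x y := h1
        _ = R := by rw [dist_eq_norm, ← norm_neg, neg_sub, hy]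
    · set d : ℝ := dist x c with hd
      have hd0 : 0 < d := dist_pos.mpr hxc
      set y : E2 := c + (R / d) • (x - c) with hy_def
      have hymem : y ∈ sphere c R := by
        rw [mem_sphere_iff_norm, hy_def, add_sub_cancel_left, norm_smul,
          Real.norm_eq_abs, abs_of_pos (div_pos hR hd0), ← dist_eq_norm, ← hd]
        field_simp
      have hdist : dist x y = |d - R| := by
        rw [dist_eq_norm, hy_def]
        have h2 : x - (c + (R / d) • (x - c)) = (1 - R / d) • (x - c) := by module
        rw [h2, norm_smul, Real.norm_eq_abs, ← dist_eq_norm, ← hd]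
        rw [show |d - R| = |(1 - R/d) * d| by congr 1; field_simp, abs_mul,
          abs_of_pos hd0]
      calc Metric.infDist x (sphere c R) ≤ dist x y := Metric.infDist_le_dist_of_mem hymem
        _ = |d - R| := hdist
  · apply le_of_not_gt
    rw [Metric.infDist_lt_iff hne]
    rintro ⟨y, hy, hlt⟩
    rw [mem_sphere_iff_norm] at hy
    have h1 : |dist x c - dist y c| ≤ dist x y := abs_dist_sub_le x y c
    have h2 : dist y c = R := by rw [dist_eq_norm, hy]
    rw [h2] at h1
    linarith
lemma infDist_line (x p v : E2) (hv : v ≠ 0) :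
    Metric.infDist x {q : E2 | ∃ t : ℝ, q = p + t • v}
      = |⟪x - p, ‖v‖⁻¹ • rot2 v⟫| := by
  have hvn : (0:ℝ) < ‖v‖ := norm_pos_iff.mpr hv
  set z : E2 := x - p with hz
  set u : E2 := ‖v‖⁻¹ • rot2 v with hu
  have hS : ({q : E2 | ∃ t : ℝ, q = p + t • v}).Nonempty := ⟨p + (0:ℝ) • v, ⟨0, rfl⟩⟩
  have hzu : ⟪z, u⟫ ^ 2 * ‖v‖ ^ 2 = ⟪z, rot2 v⟫ ^ 2 := by
    rw [hu, real_inner_smul_right, mul_pow]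
    field_simp
  have hdist : ∀ t : ℝ, (dist x (p + t • v))^2 * ‖v‖^2
      = (⟪z, v⟫ - t * ‖v‖^2)^2 + ⟪z, rot2 v⟫^2 := by
    intro t
    have h1 : x - (p + t • v) = z - t • v := by rw [hz]; module
    rw [dist_eq_norm, h1]
    have h2 : ‖z - t • v‖^2 = ‖z‖^2 - 2 * (t * ⟪z, v⟫) + t^2 * ‖v‖^2 := by
      rw [← real_inner_self_eq_norm_sq, ← real_inner_self_eq_norm_sq,
        ← real_inner_self_eq_norm_sq]
      simp only [inner_sub_left, inner_sub_right, real_inner_smul_left,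
        real_inner_smul_right, real_inner_comm z v]
      ring
    rw [h2]
    linear_combination (-1 : ℝ) * pyth2 z v
  have habs : ∀ t : ℝ, |⟪z, u⟫| ≤ dist x (p + t • v) := by
    intro t
    have h0 := hdist t
    have h5 : ⟪z,u⟫^2 ≤ (dist x (p + t • v))^2 := by
      have hv2 : (0:ℝ) < ‖v‖^2 := by positivity
      nlinarith [h0, hzu, sq_nonneg (⟪z, v⟫ - t * ‖v‖^2)]
    nlinarith [sq_abs (⟪z,u⟫), dist_nonneg (x := x) (y := p + t • v), abs_nonneg (⟪z,u⟫)]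
  have hmin : dist x (p + (⟪z, v⟫ / ‖v‖^2) • v) = |⟪z, u⟫| := by
    have h0 := hdist (⟪z, v⟫ / ‖v‖^2)
    have h1 : (⟪z, v⟫ - (⟪z, v⟫ / ‖v‖^2) * ‖v‖^2) = 0 := by field_simp; ring
    rw [h1] at h0
    have h6 : (dist x (p + (⟪z, v⟫ / ‖v‖^2) • v))^2 = ⟪z,u⟫^2 := by
      have hv2 : (0:ℝ) < ‖v‖^2 := by positivity
      nlinarith [h0, hzu]
    nlinarith [sq_abs (⟪z,u⟫), dist_nonneg (x := x) (y := p + (⟪z, v⟫ / ‖v‖^2) • v),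
      abs_nonneg (⟪z,u⟫)]
  apply le_antisymm
  · calc Metric.infDist x {q : E2 | ∃ t : ℝ, q = p + t • v}
        ≤ dist x (p + (⟪z, v⟫ / ‖v‖^2) • v) :=
          Metric.infDist_le_dist_of_mem ⟨_, rfl⟩
      _ = |⟪z, u⟫| := hmin
  · apply le_of_not_gt
    rw [Metric.infDist_lt_iff hS]
    rintro ⟨y, ⟨t, rfl⟩, hlt⟩
    exact absurd hlt (not_lt.mpr (habs t))
lemma var_min (n : ℕ) (hn : 0 < n) (t : Fin n → ℝ) (s : ℝ) :
    ∑ i, (t i - (∑ j, t j) / n) ^ 2 ≤ ∑ i, (t i - s) ^ 2 := by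
  set m : ℝ := (∑ j, t j) / n with hm_def
  have hsum : ∑ i, (t i - m) = 0 := by
    rw [Finset.sum_sub_distrib, Finset.sum_const, card_univ, Fintype.card_fin, hm_def, nsmul_eq_mul]
    have : (n : ℝ) ≠ 0 := Nat.cast_ne_zero.mpr hn.ne'
    field_simp; ring
  have expand : ∑ i, (t i - s) ^ 2
      = ∑ i, (t i - m) ^ 2 + (2 * (m - s)) * ∑ i, (t i - m) + n * (m - s) ^ 2 := by
    rw [Finset.mul_sum]
    rw [show (n : ℝ) * (m - s) ^ 2 = ∑ _i : Fin n, (m - s)^2 by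
      rw [Finset.sum_const, card_univ, Fintype.card_fin, nsmul_eq_mul]]
    rw [← Finset.sum_add_distrib, ← Finset.sum_add_distrib]
    exact Finset.sum_congr rfl fun i _ => by ring
  rw [expand, hsum]
  nlinarith [sq_nonneg (m - s), (Nat.cast_pos.mpr hn : (0:ℝ) < n)]
set_option maxHeartbeats 1000000 in
lemma key_asymp (n : ℕ) (hn : 0 < n) (p : Fin n → E2) (mL : ℝ) (hmL : 0 ≤ mL)
    (hlb : ∀ u : E2, ‖u‖ = 1 → ∀ d : ℝ, mL ≤ ∑ i, (⟪p i, u⟫ - d) ^ 2)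
    (ε : ℝ) (hε : 0 < ε) :
    ∃ Rad : ℝ, 1 ≤ Rad ∧ ∀ c : E2, Rad ≤ ‖c‖ → ∀ R : ℝ,
      mL - ε ≤ ∑ i, (dist (p i) c - R) ^ 2 := by
  set P : ℝ := ∑ i, ‖p i‖ with hP
  have hP0 : 0 ≤ P := Finset.sum_nonneg fun i _ => norm_nonneg _
  have hPi : ∀ i, ‖p i‖ ≤ P := fun i =>
    Finset.single_le_sum (f := fun i => ‖p i‖) (fun j _ => norm_nonneg _) (Finset.mem_univ i)
  set B : ℝ := Real.sqrt mL + 1 with hB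
  have hB1 : 1 ≤ B := by nlinarith [Real.sqrt_nonneg mL]
  have hBsq : mL ≤ B ^ 2 := by nlinarith [Real.sq_sqrt hmL, Real.sqrt_nonneg mL]
  set ε' : ℝ := min 1 (ε / (2 * n * (B + 1) + 1)) with hε'def
  have hnR : (0:ℝ) < n := Nat.cast_pos.mpr hn
  have hε'0 : 0 < ε' := lt_min one_pos (by positivity)
  have hε'1 : ε' ≤ 1 := min_le_left _ _
  have hε'ε : 2 * n * (B + 1) * ε' ≤ ε := by
    have h1 : ε' ≤ ε / (2 * n * (B + 1) + 1) := min_le_right _ _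
    have h3 : (0:ℝ) < 2 * n * (B + 1) + 1 := by positivity
    rw [le_div_iff₀ h3] at h1
    nlinarith
  clear_value B ε'
  have hQ0 : (0:ℝ) ≤ P ^ 2 / (2 * ε') := by positivity
  refine ⟨P + 1 + P ^ 2 / (2 * ε'), by linarith, ?_⟩
  intro c hc R
  have hcn : (0:ℝ) < ‖c‖ := by linarith
  set u : E2 := ‖c‖⁻¹ • c with hu_def
  have hu : ‖u‖ = 1 := by
    rw [hu_def, norm_smul, Real.norm_eq_abs, abs_of_pos (inv_pos.mpr hcn)]
    field_simp
  set t : Fin n → ℝ := fun i => ⟪p i, u⟫ with ht_def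
  have hteq : ∀ i, ⟪p i, u⟫ = t i := fun i => rfl
  have htn : ∀ i, |t i| ≤ ‖p i‖ := by
    intro i
    calc |t i| ≤ ‖p i‖ * ‖u‖ := abs_real_inner_le_norm _ _
      _ = ‖p i‖ := by rw [hu, mul_one]
  have hip : ∀ i, ⟪p i, c⟫ = ‖c‖ * t i := by
    intro i
    rw [← hteq i, hu_def, real_inner_smul_right]
    field_simp
  have hdistsq : ∀ i, (dist (p i) c) ^ 2 = (‖c‖ - t i) ^ 2 + (‖p i‖ ^ 2 - t i ^ 2) := by
    intro i
    rw [dist_eq_norm, norm_sub_sq_real, hip i]; ring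
  clear_value t u
  have htP : ∀ i, |t i| ≤ P := fun i => le_trans (htn i) (hPi i)
  have hti2 : ∀ i, t i ^ 2 ≤ ‖p i‖ ^ 2 := by
    intro i
    have h2 := htn i
    nlinarith [abs_nonneg (t i), sq_abs (t i)]
  have hct : ∀ i, 1 ≤ ‖c‖ - t i := by
    intro i
    have := (abs_le.mp (htP i)).2
    linarith
  have hδlow : ∀ i, ‖c‖ - t i ≤ dist (p i) c := by
    intro i
    have h2 : (‖c‖ - t i) ^ 2 ≤ (dist (p i) c) ^ 2 := by
      linarith [hdistsq i, hti2 i]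
    nlinarith [h2, dist_nonneg (x := p i) (y := c), hct i]
  have hP2 : P ^ 2 ≤ 2 * ε' * (‖c‖ - P) := by
    have h4 : P ^ 2 / (2 * ε') ≤ ‖c‖ - P := by linarith
    have h5 : 2 * ε' * (P ^ 2 / (2 * ε')) = P ^ 2 := by field_simp
    nlinarith [h4, hε'0]
  have hδhigh : ∀ i, dist (p i) c ≤ (‖c‖ - t i) + ε' := by
    intro i
    have hpi2 : ‖p i‖ ^ 2 ≤ P ^ 2 := by nlinarith [hPi i, norm_nonneg (p i)]
    have h2e : P ^ 2 ≤ 2 * ε' * (‖c‖ - t i) := by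
      have hti := (abs_le.mp (htP i)).2
      have hmul : 0 ≤ 2 * ε' * (P - t i) := mul_nonneg (by positivity) (by linarith)
      have hexp : 2 * ε' * (‖c‖ - t i) = 2 * ε' * (‖c‖ - P) + 2 * ε' * (P - t i) := by
        ring
      linarith [hP2]
    have hsq : (dist (p i) c) ^ 2 ≤ ((‖c‖ - t i) + ε') ^ 2 := by
      have h1 := hdistsq i
      have h2 : ‖p i‖ ^ 2 - t i ^ 2 ≤ P ^ 2 := by nlinarith [sq_nonneg (t i)]
      nlinarith [sq_nonneg ε']
    nlinarith [hsq, dist_nonneg (x := p i) (y := c), hε'0, hct i]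
  set s : ℝ := ‖c‖ - R with hs_def
  have hsplit : ∀ i, dist (p i) c - R = (t i - s) * (-1) + (dist (p i) c - (‖c‖ - t i)) := by
    intro i; rw [hs_def]; ring
  by_cases hcase : ∀ i, |t i - s| ≤ B + 1
  · -- all residuals moderate: compare with line value
    have hterm : ∀ i ∈ Finset.univ, (t i - s) ^ 2 - 2 * ε' * (B + 1)
        ≤ (dist (p i) c - R) ^ 2 := by
      intro i _
      have h6 := hδlow i
      have h7 := hδhigh i
      have h8 := abs_le.mp (hcase i)
      have h9 := hsplit i
      nlinarith [mul_nonneg (by linarith : (0:ℝ) ≤ dist (p i) c - (‖c‖ - t i))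
          (by linarith : (0:ℝ) ≤ (B + 1) - (t i - s)),
        mul_nonneg (by linarith : (0:ℝ) ≤ ε' - (dist (p i) c - (‖c‖ - t i)))
          (by linarith : (0:ℝ) ≤ B + 1),
        sq_nonneg (dist (p i) c - (‖c‖ - t i))]
    have hsum := Finset.sum_le_sum hterm
    have hL : ∑ i, ((t i - s) ^ 2 - 2 * ε' * (B + 1))
        = (∑ i, (t i - s) ^ 2) - n * (2 * ε' * (B + 1)) := by
      rw [Finset.sum_sub_distrib, Finset.sum_const, card_univ, Fintype.card_fin,
        nsmul_eq_mul]
    have hlb2 : mL ≤ ∑ i, (t i - s) ^ 2 := by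
      have h0 := hlb u hu s
      simpa only [hteq] using h0
    rw [hL] at hsum
    calc mL - ε ≤ mL - 2 * n * (B + 1) * ε' := by linarith
      _ ≤ (∑ i, (t i - s) ^ 2) - n * (2 * ε' * (B + 1)) := by
          linarith [hlb2]
      _ ≤ ∑ i, (dist (p i) c - R) ^ 2 := hsum
  · push_neg at hcase
    obtain ⟨i, hi⟩ := hcase
    have h6 := hδlow i
    have h7 := hδhigh i
    have habs : B ≤ |dist (p i) c - R| := by
      have h10 : |t i - s| ≤ |dist (p i) c - R| + ε' := by
        have h11 : t i - s = -(dist (p i) c - R) + (dist (p i) c - (‖c‖ - t i)) := by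
          rw [hs_def]; ring
        calc |t i - s| ≤ |(-(dist (p i) c - R))| + |dist (p i) c - (‖c‖ - t i)| := by
              rw [h11]; exact abs_add_le _ _
          _ ≤ |dist (p i) c - R| + ε' := by
              rw [abs_neg]
              have : |dist (p i) c - (‖c‖ - t i)| ≤ ε' := by
                rw [abs_le]; constructor <;> linarith
              linarith
      linarith
    have hterm : mL ≤ (dist (p i) c - R) ^ 2 := by
      nlinarith [sq_abs (dist (p i) c - R), habs, hB1, hBsq, abs_nonneg (dist (p i) c - R)]
    calc mL - ε ≤ mL := by linarith
      _ ≤ (dist (p i) c - R) ^ 2 := hterm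
      _ ≤ ∑ j, (dist (p j) c - R) ^ 2 :=
          Finset.single_le_sum (f := fun j => (dist (p j) c - R) ^ 2)
            (fun j _ => sq_nonneg _) (Finset.mem_univ i)

/-- For any finite nonempty family of points in ℝ², the sum of squared
distances to `S` attains its minimum over the class of sets `S` that are circles or
affine lines. -/
theorem stmt_1 (n : ℕ) (hn : 1 ≤ n) (p : Fin n → E2) :
    ∃ S₀ : Set E2, IsCircleOrLine S₀ ∧
      ∀ S : Set E2, IsCircleOrLine S →
        ∑ i, (Metric.infDist (p i) S₀) ^ 2 ≤ ∑ i, (Metric.infDist (p i) S) ^ 2 := by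
  classical
  have hn0 : 0 < n := hn
  have hnR : (0:ℝ) < n := Nat.cast_pos.mpr hn0
  set V : E2 → ℝ := fun u => ∑ i, (⟪p i, u⟫ - (∑ j, ⟪p j, u⟫) / n) ^ 2 with hV_def
  have hinner_cont : ∀ i : Fin n, Continuous fun u : E2 => ⟪p i, u⟫ :=
    fun i => Continuous.inner continuous_const continuous_id
  have hVcont : Continuous V := by
    refine continuous_finset_sum _ fun i _ => ?_
    exact (((hinner_cont i).sub
      ((continuous_finset_sum _ fun j _ => hinner_cont j).div_const _)).pow 2)
  have hsphere_ne : (Metric.sphere (0:E2) 1).Nonempty :=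
    NormedSpace.sphere_nonempty.mpr zero_le_one
  obtain ⟨u₀, hu₀mem, hu₀min⟩ :=
    (isCompact_sphere (0:E2) 1).exists_isMinOn hsphere_ne hVcont.continuousOn
  have hu₀ : ‖u₀‖ = 1 := by simpa using hu₀mem
  set mL : ℝ := V u₀ with hmL_def
  have hmL0 : 0 ≤ mL := Finset.sum_nonneg fun i _ => sq_nonneg _
  have hlb : ∀ u : E2, ‖u‖ = 1 → ∀ d : ℝ, mL ≤ ∑ i, (⟪p i, u⟫ - d) ^ 2 := by
    intro u hu d
    have hmem : u ∈ Metric.sphere (0:E2) 1 := by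
      rw [mem_sphere_zero_iff_norm]; exact hu
    have h1 : V u₀ ≤ V u := isMinOn_iff.mp hu₀min u hmem
    exact le_trans h1 (var_min n hn0 (fun i => ⟪p i, u⟫) d)
  have hlineLB : ∀ (p0 v : E2), v ≠ 0 →
      mL ≤ ∑ i, (Metric.infDist (p i) {q : E2 | ∃ t : ℝ, q = p0 + t • v}) ^ 2 := by
    intro p0 v hv
    have hvn : (0:ℝ) < ‖v‖ := norm_pos_iff.mpr hv
    have hu : ‖(‖v‖⁻¹ • rot2 v : E2)‖ = 1 := by
      rw [norm_smul, norm_rot2, Real.norm_eq_abs, abs_of_pos (inv_pos.mpr hvn)]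
      field_simp
    have hval : ∑ i, (Metric.infDist (p i) {q : E2 | ∃ t : ℝ, q = p0 + t • v}) ^ 2
        = ∑ i, (⟪p i, ‖v‖⁻¹ • rot2 v⟫ - ⟪p0, ‖v‖⁻¹ • rot2 v⟫) ^ 2 := by
      refine Finset.sum_congr rfl fun i _ => ?_
      rw [infDist_line (p i) p0 v hv, sq_abs, inner_sub_left]
    rw [hval]
    exact hlb _ hu _
  have hcirc_val : ∀ (c : E2) (R : ℝ), 0 < R →
      ∑ i, (Metric.infDist (p i) (Metric.sphere c R)) ^ 2
        = ∑ i, (dist (p i) c - R) ^ 2 :=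
    fun c R hR => Finset.sum_congr rfl fun i _ => by rw [infDist_sphere _ _ _ hR, sq_abs]
  set L0 : Set E2 :=
    {q : E2 | ∃ t : ℝ, q = ((∑ j, ⟪p j, u₀⟫) / n) • u₀ + t • rot2 u₀} with hL0_def
  have hrotu₀ : rot2 u₀ ≠ 0 := by
    intro h
    apply_fun (‖·‖) at h
    rw [norm_rot2, hu₀] at h
    simpa using h
  have hL0_line : IsCircleOrLine L0 := Or.inr ⟨_, _, hrotu₀, rfl⟩
  have hL0_val : ∑ i, (Metric.infDist (p i) L0) ^ 2 = mL := by
    rw [hmL_def, hV_def]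
    refine Finset.sum_congr rfl fun i _ => ?_
    rw [hL0_def, infDist_line (p i) _ _ hrotu₀, norm_rot2, hu₀, inv_one, one_smul,
      rot2_rot2, inner_neg_right, abs_neg, sq_abs, inner_sub_left, real_inner_smul_left,
      real_inner_self_eq_norm_sq, hu₀]
    ring_nf
  set F : E2 → ℝ := fun c => ∑ i, (dist (p i) c - (∑ j, dist (p j) c) / n) ^ 2 with hF_def
  have hFcont : Continuous F := by
    have h1 : ∀ i : Fin n, Continuous fun c : E2 => dist (p i) c :=
      fun i => continuous_const.dist continuous_id
    refine continuous_finset_sum _ fun i _ => ?_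
    exact (((h1 i).sub ((continuous_finset_sum _ fun j _ => h1 j).div_const _)).pow 2)
  have hF_le : ∀ (c : E2) (R : ℝ), F c ≤ ∑ i, (dist (p i) c - R) ^ 2 :=
    fun c R => var_min n hn0 (fun i => dist (p i) c) R
  by_cases hcase : ∀ c : E2, mL ≤ F c
  · refine ⟨L0, hL0_line, ?_⟩
    intro S hS
    rw [hL0_val]
    rcases hS with ⟨c, R, hR, rfl⟩ | ⟨p0, v, hv, rfl⟩
    · rw [hcirc_val c R hR]
      exact le_trans (hcase c) (hF_le c R)
    · exact hlineLB p0 v hv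
  · push_neg at hcase
    obtain ⟨c₀, hc₀⟩ := hcase
    have hε : 0 < mL - F c₀ := by linarith
    obtain ⟨Rad, hRad1, hRad⟩ := key_asymp n hn0 p mL hmL0 hlb (mL - F c₀) hε
    set Rad' : ℝ := max Rad ‖c₀‖ with hRad'_def
    have hc₀mem : c₀ ∈ Metric.closedBall (0:E2) Rad' := by
      rw [Metric.mem_closedBall, dist_zero_right]; exact le_max_right _ _
    obtain ⟨cs, hcsmem, hcsmin⟩ := (isCompact_closedBall (0:E2) Rad').exists_isMinOn
      ⟨c₀, hc₀mem⟩ hFcont.continuousOn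
    have hFcs : F cs ≤ F c₀ := isMinOn_iff.mp hcsmin c₀ hc₀mem
    have hFc₀0 : 0 ≤ F c₀ := Finset.sum_nonneg fun i _ => sq_nonneg _
    set rs : ℝ := (∑ j, dist (p j) cs) / n with hrs_def
    have hrs0 : 0 ≤ rs :=
      div_nonneg (Finset.sum_nonneg fun j _ => dist_nonneg) hnR.le
    have hrs : 0 < rs := by
      rcases hrs0.lt_or_eq with h | h
      · exact h
      · exfalso
        have hsum0 : ∑ j, dist (p j) cs = 0 := by
          have h' : (∑ j, dist (p j) cs) / (n:ℝ) = 0 := by rw [← hrs_def]; exact h.symm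
          rcases div_eq_zero_iff.mp h' with h2 | h2
          · exact h2
          · exact absurd h2 hnR.ne'
        have hall : ∀ j, p j = cs := by
          intro j
          have := (Finset.sum_eq_zero_iff_of_nonneg
            (fun j _ => (dist_nonneg : (0:ℝ) ≤ dist (p j) cs))).mp hsum0 j (Finset.mem_univ j)
          exact dist_eq_zero.mp this
        have h0 : mL ≤ ∑ i, (⟪p i, u₀⟫ - ⟪cs, u₀⟫) ^ 2 := hlb u₀ hu₀ _
        have h1 : ∑ i, (⟪p i, u₀⟫ - ⟪cs, u₀⟫) ^ 2 = 0 := by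
          refine Finset.sum_eq_zero fun i _ => ?_
          rw [hall i]; ring
        rw [h1] at h0
        linarith
    refine ⟨Metric.sphere cs rs, Or.inl ⟨cs, rs, hrs, rfl⟩, ?_⟩
    intro S hS
    rw [hcirc_val cs rs hrs]
    have hSval : ∑ i, (dist (p i) cs - rs) ^ 2 = F cs := by rw [hF_def]
    rw [hSval]
    rcases hS with ⟨c, R, hR, rfl⟩ | ⟨p0, v, hv, rfl⟩
    · rw [hcirc_val c R hR]
      rcases le_or_gt ‖c‖ Rad' with hle | hlt
      · have hmem : c ∈ Metric.closedBall (0:E2) Rad' := by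
          rw [Metric.mem_closedBall, dist_zero_right]; exact hle
        exact le_trans (isMinOn_iff.mp hcsmin c hmem) (hF_le c R)
      · have h2 := hRad c (le_trans (le_max_left _ _) hlt.le) R
        linarith
    · have h2 := hlineLB p0 v hv
      linarith
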